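/- Suppose either (I) 3/4 < p < 1 and ℓ_inf(α) > 1/(4p−2), or (II) p = 1, 1/(4p−2) < ℓ_inf(α) ≤ ℓ_sup(α) < 1 and 0 < ℓ_inf(β) ≤ ℓ_sup(β) < (1−ℓ_sup(α))/(1−ℓ_inf(α)). Then for every ε > 0, (1/s_n²) Σ_{k=n}^∞ E[Y_k² · 1_{|Y_k| > ε s_n}] → 0 as n → ∞. -/

import Mathlib

open MeasureTheory ProbabilityTheory Filter

noncomputable section

/-- The increments `X_n := S_n - S_{n-1}` of the walk. -/
def derwX {Ω : Type*} (S : ℕ → Ω → ℝ) (n : ℕ) (ω : Ω) : ℝ := S n ω - S (n - 1) ω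

/-- The natural filtration `F_n^X = σ(X_1, …, X_n)` of the increments. -/
def derwF {Ω : Type*} (S : ℕ → Ω → ℝ) (n : ℕ) : MeasurableSpace Ω :=
  ⨆ k ∈ Finset.Icc 1 n, MeasurableSpace.comap (derwX S k) Real.measurableSpace

/-- The dynamic elephant random walk (DERW) with parameters `p, q ∈ [0,1]` and
sequences `α, β` in `[0,1]` (indexed from 1). -/
structure IsDERW {Ω : Type*} [MeasurableSpace Ω] (μ : Measure Ω)
    (p q : ℝ) (α β : ℕ → ℝ) (S : ℕ → Ω → ℝ) : Prop where
  hp : p ∈ Set.Icc (0 : ℝ) 1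
  hq : q ∈ Set.Icc (0 : ℝ) 1
  hα : ∀ n, α n ∈ Set.Icc (0 : ℝ) 1
  hβ : ∀ n, β n ∈ Set.Icc (0 : ℝ) 1
  hS0 : ∀ ω, S 0 ω = 0
  hmeas : ∀ n, Measurable (derwX S n)
  hpm : ∀ n, 1 ≤ n → ∀ ω, derwX S n ω = 1 ∨ derwX S n ω = -1
  hE1 : ∫ ω, derwX S 1 ω ∂μ = α 1 * (2 * q - 1) + (1 - α 1) * (2 * β 1 - 1)
  hCE : ∀ n, 1 ≤ n → μ[derwX S (n + 1) | derwF S n]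
      =ᵐ[μ] fun ω => α (n + 1) * (2 * p - 1) / (n : ℝ) * S n ω
        + (1 - α (n + 1)) * (2 * β (n + 1) - 1)

/-- `a_n := ∏_{k=1}^{n-1} (1 + (2p-1) α_{k+1} / k)`, with `a_1 = 1`. -/
def derwa (p : ℝ) (α : ℕ → ℝ) (n : ℕ) : ℝ :=
  ∏ k ∈ Finset.Ico 1 n, (1 + (2 * p - 1) * α (k + 1) / (k : ℝ))

/-- `A_n² := ∑_{k=1}^n (1 - E[X_k]²) / a_k²`. -/
def derwAsq {Ω : Type*} [MeasurableSpace Ω] (μ : Measure Ω) (p : ℝ) (α : ℕ → ℝ)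
    (S : ℕ → Ω → ℝ) (n : ℕ) : ℝ :=
  ∑ k ∈ Finset.Icc 1 n, (1 - (∫ ω, derwX S k ω ∂μ) ^ 2) / derwa p α k ^ 2

/-- `A_∞² := ∑_{k=1}^∞ (1 - E[X_k]²) / a_k²`. -/
def derwAsqInf {Ω : Type*} [MeasurableSpace Ω] (μ : Measure Ω) (p : ℝ) (α : ℕ → ℝ)
    (S : ℕ → Ω → ℝ) : ℝ :=
  ∑' k : ℕ, (1 - (∫ ω, derwX S (k + 1) ω ∂μ) ^ 2) / derwa p α (k + 1) ^ 2

/-- The martingale `M_n := (S_n - E[S_n]) / a_n` (note `M_0 = 0` since `S_0 = 0`). -/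
def derwM {Ω : Type*} [MeasurableSpace Ω] (μ : Measure Ω) (p : ℝ) (α : ℕ → ℝ)
    (S : ℕ → Ω → ℝ) (n : ℕ) (ω : Ω) : ℝ :=
  (S n ω - ∫ ω', S n ω' ∂μ) / derwa p α n

/-- The martingale differences `Y_n := M_n - M_{n-1}`. -/
def derwY {Ω : Type*} [MeasurableSpace Ω] (μ : Measure Ω) (p : ℝ) (α : ℕ → ℝ)
    (S : ℕ → Ω → ℝ) (n : ℕ) (ω : Ω) : ℝ :=
  derwM μ p α S n ω - derwM μ p α S (n - 1) ω

/-- `s_n² := ∑_{k=n}^∞ E[Y_k²]`. -/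
def derwssq {Ω : Type*} [MeasurableSpace Ω] (μ : Measure Ω) (p : ℝ) (α : ℕ → ℝ)
    (S : ℕ → Ω → ℝ) (n : ℕ) : ℝ :=
  ∑' k : ℕ, ∫ ω, derwY μ p α S (n + k) ω ^ 2 ∂μ

variable {Ω : Type*} {m0 : MeasurableSpace Ω} (μ : Measure Ω) [IsProbabilityMeasure μ]
  (p q : ℝ) (α β : ℕ → ℝ) (S : ℕ → Ω → ℝ)

set_option linter.unusedSectionVars false
set_option maxHeartbeats 1000000

/-! ### Auxiliary lemmas about `derwa` -/

lemma derw_one_le_prod {s : Finset ℕ} {f : ℕ → ℝ} (hf : ∀ i ∈ s, 1 ≤ f i) :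
    1 ≤ ∏ i ∈ s, f i := by
  calc (1:ℝ) = ∏ _i ∈ s, 1 := by simp
    _ ≤ ∏ i ∈ s, f i := Finset.prod_le_prod (by simp) (by simpa using hf)

lemma derw_one_le_factor (hp : 1/2 ≤ p) (hα : ∀ n, α n ∈ Set.Icc (0:ℝ) 1) (k : ℕ) :
    1 ≤ 1 + (2 * p - 1) * α (k + 1) / (k : ℝ) := by
  have h2 := (hα (k+1)).1
  have h3 : 0 ≤ (2 * p - 1) * α (k+1) / (k:ℝ) :=
    div_nonneg (mul_nonneg (by linarith) h2) (Nat.cast_nonneg k)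
  linarith

lemma derw_factor_le (hp2 : p ≤ 1) (hα : ∀ n, α n ∈ Set.Icc (0:ℝ) 1) {k : ℕ} (hk : 1 ≤ k) :
    1 + (2 * p - 1) * α (k + 1) / (k : ℝ) ≤ ((k:ℝ) + 1) / k := by
  have hk0 : (0:ℝ) < k := by exact_mod_cast hk
  have h1 := (hα (k+1)).1
  have h2 := (hα (k+1)).2
  have hnum : (2 * p - 1) * α (k+1) ≤ 1 := by nlinarith
  have : ((k:ℝ) + 1) / k = 1 + 1 / k := by field_simp
  rw [this]
  gcongr

lemma derw_one_le_a (hp : 1/2 ≤ p) (hα : ∀ n, α n ∈ Set.Icc (0:ℝ) 1) (n : ℕ) :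
    1 ≤ derwa p α n := by
  unfold derwa
  exact derw_one_le_prod fun k _ => derw_one_le_factor p α hp hα k

lemma derw_a_pos (hp : 1/2 ≤ p) (hα : ∀ n, α n ∈ Set.Icc (0:ℝ) 1) (n : ℕ) :
    0 < derwa p α n :=
  lt_of_lt_of_le one_pos (derw_one_le_a p α hp hα n)

lemma derw_a_mul {n m : ℕ} (hn : 1 ≤ n) (hnm : n ≤ m) :
    derwa p α m
      = derwa p α n * ∏ k ∈ Finset.Ico n m, (1 + (2 * p - 1) * α (k + 1) / (k : ℝ)) :=
  (Finset.prod_Ico_consecutive _ hn hnm).symm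

lemma derw_a_succ {n : ℕ} (hn : 1 ≤ n) :
    derwa p α (n+1) = derwa p α n * (1 + (2 * p - 1) * α (n + 1) / (n : ℝ)) := by
  unfold derwa
  rw [Finset.prod_Ico_succ_top hn]

lemma derw_a_mono (hp : 1/2 ≤ p) (hα : ∀ n, α n ∈ Set.Icc (0:ℝ) 1) {n m : ℕ} (hnm : n ≤ m) :
    derwa p α n ≤ derwa p α m := by
  rcases Nat.eq_zero_or_pos n with rfl | hn
  · have h0 : derwa p α 0 = 1 := by simp [derwa]
    rw [h0]; exact derw_one_le_a p α hp hα m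
  · rw [derw_a_mul p α hn hnm]
    exact le_mul_of_one_le_right (derw_a_pos p α hp hα n).le
      (derw_one_le_prod fun k _ => derw_one_le_factor p α hp hα k)

lemma derw_telescope {n m : ℕ} (hn : 1 ≤ n) (hnm : n ≤ m) :
    ∏ k ∈ Finset.Ico n m, (((k:ℝ) + 1) / k) = (m : ℝ) / n := by
  induction m, hnm using Nat.le_induction with
  | base =>
      have h0 : (0:ℝ) < n := by exact_mod_cast hn
      simp [div_self h0.ne']
  | succ m hm ih =>
      have h0 : (0:ℝ) < n := by exact_mod_cast hn
      have hm0 : (0:ℝ) < m := by exact_mod_cast lt_of_lt_of_le hn hm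
      rw [Finset.prod_Ico_succ_top hm, ih]
      push_cast
      field_simp

lemma derw_a_ratio (hp : 1/2 ≤ p) (hp2 : p ≤ 1) (hα : ∀ n, α n ∈ Set.Icc (0:ℝ) 1)
    {n m : ℕ} (hn : 1 ≤ n) (hnm : n ≤ m) :
    derwa p α m ≤ derwa p α n * m / n := by
  rw [derw_a_mul p α hn hnm, mul_div_assoc]
  refine mul_le_mul_of_nonneg_left ?_ (derw_a_pos p α hp hα n).le
  calc ∏ k ∈ Finset.Ico n m, (1 + (2 * p - 1) * α (k + 1) / (k : ℝ))
      ≤ ∏ k ∈ Finset.Ico n m, (((k:ℝ) + 1) / k) := by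
        refine Finset.prod_le_prod (fun k hk => ?_) (fun k hk => ?_)
        · exact le_trans zero_le_one (derw_one_le_factor p α hp hα k)
        · exact derw_factor_le p α hp2 hα (le_trans hn (Finset.mem_Ico.mp hk).1)
    _ = (m:ℝ) / n := derw_telescope hn hnm

lemma derw_a_growth (hp : 1/2 ≤ p) (hα : ∀ n, α n ∈ Set.Icc (0:ℝ) 1) {ℓ : ℝ} (hℓ0 : 0 ≤ ℓ)
    (hθ1 : (2*p-1) * ℓ ≤ 1) {N : ℕ} (hN : 1 ≤ N)
    (hev : ∀ k, N ≤ k → ℓ ≤ α k) {n : ℕ} (hn : N ≤ n) :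
    ((n:ℝ)/(N:ℝ)) ^ ((2*p-1) * ℓ) ≤ derwa p α n := by
  set θ := (2*p-1) * ℓ with hθdef
  have hθ0 : 0 ≤ θ := mul_nonneg (by linarith) hℓ0
  have hN0 : (0:ℝ) < N := by exact_mod_cast hN
  have key : ∀ k ∈ Finset.Ico N n, (((k:ℝ) + 1) / k) ^ θ
      ≤ 1 + (2 * p - 1) * α (k + 1) / (k : ℝ) := by
    intro k hk
    have hk1 : N ≤ k := (Finset.mem_Ico.mp hk).1
    have hk0 : (0:ℝ) < k := by exact_mod_cast lt_of_lt_of_le hN hk1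
    have heq : ((k:ℝ) + 1) / k = 1 + 1/(k:ℝ) := by field_simp
    have hb : (1 + 1/(k:ℝ)) ^ θ ≤ 1 + θ * (1/(k:ℝ)) :=
      rpow_one_add_le_one_add_mul_self (le_trans (by norm_num : (-1:ℝ) ≤ 0) (by positivity)) hθ0 hθ1
    rw [heq]
    refine hb.trans ?_
    have hle : θ ≤ (2*p-1) * α (k+1) := by
      have h1 := hev (k+1) (by omega)
      have h2 : (0:ℝ) ≤ 2*p-1 := by linarith
      rw [hθdef]
      exact mul_le_mul_of_nonneg_left h1 h2
    calc 1 + θ * (1/(k:ℝ)) = 1 + θ / k := by ring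
      _ ≤ 1 + (2*p-1) * α (k+1) / k := by gcongr
  calc ((n:ℝ)/(N:ℝ)) ^ θ
      = ∏ k ∈ Finset.Ico N n, (((k:ℝ) + 1) / k) ^ θ := by
        rw [Real.finset_prod_rpow _ _ (fun k hk => by positivity), derw_telescope hN hn]
    _ ≤ ∏ k ∈ Finset.Ico N n, (1 + (2 * p - 1) * α (k + 1) / (k : ℝ)) :=
        Finset.prod_le_prod (fun k _ => by positivity) key
    _ ≤ derwa p α n := by
        rw [derw_a_mul p α hN hn]
        exact le_mul_of_one_le_left
          (Finset.prod_nonneg fun k _ => le_trans zero_le_one (derw_one_le_factor p α hp hα k))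
          (derw_one_le_a p α hp hα N)
/-! ### Auxiliary lemmas about the walk -/

lemma derw_S_meas (h : IsDERW μ p q α β S) : ∀ n, Measurable (S n)
  | 0 => by
      have h0 : S 0 = fun _ => (0:ℝ) := funext h.hS0
      rw [h0]; exact measurable_const
  | (n+1) => by
      have h0 : S (n+1) = fun ω => S n ω + derwX S (n+1) ω := by
        funext ω; simp [derwX]
      rw [h0]
      exact (derw_S_meas h n).add (h.hmeas (n+1))

lemma derw_X_bound (h : IsDERW μ p q α β S) (n : ℕ) (ω : Ω) : |derwX S n ω| ≤ 1 := by
  rcases Nat.eq_zero_or_pos n with rfl | hn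
  · simp [derwX]
  · rcases h.hpm n hn ω with h1 | h1 <;> simp [h1]

lemma derw_S_bound (h : IsDERW μ p q α β S) : ∀ n, ∀ ω : Ω, |S n ω| ≤ (n:ℝ)
  | 0 => fun ω => by simp [h.hS0 ω]
  | (n+1) => fun ω => by
      have h1 := derw_S_bound h n ω
      have h2 := derw_X_bound μ p q α β S h (n+1) ω
      have h0 : S (n+1) ω = S n ω + derwX S (n+1) ω := by simp [derwX]
      rw [h0]
      push_cast
      calc |S n ω + derwX S (n+1) ω| ≤ |S n ω| + |derwX S (n+1) ω| := abs_add_le _ _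
        _ ≤ (n:ℝ) + 1 := add_le_add h1 h2

lemma derw_S_int (h : IsDERW μ p q α β S) (n : ℕ) : Integrable (S n) μ :=
  ⟨(derw_S_meas μ p q α β S h n).aestronglyMeasurable,
    HasFiniteIntegral.of_bounded (C := (n:ℝ)) (ae_of_all _ fun ω => by
      rw [Real.norm_eq_abs]; exact derw_S_bound μ p q α β S h n ω)⟩

lemma derw_X_int (h : IsDERW μ p q α β S) (n : ℕ) : Integrable (derwX S n) μ :=
  ⟨(h.hmeas n).aestronglyMeasurable,
    HasFiniteIntegral.of_bounded (C := (1:ℝ)) (ae_of_all _ fun ω => by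
      rw [Real.norm_eq_abs]; exact derw_X_bound μ p q α β S h n ω)⟩

lemma derw_ES_abs (h : IsDERW μ p q α β S) (n : ℕ) : |∫ ω, S n ω ∂μ| ≤ (n:ℝ) := by
  calc |∫ ω, S n ω ∂μ| ≤ ∫ ω, |S n ω| ∂μ := by
        simpa [Real.norm_eq_abs] using norm_integral_le_integral_norm (μ := μ) (S n)
    _ ≤ ∫ _ω, (n:ℝ) ∂μ := by
        refine integral_mono (derw_S_int μ p q α β S h n).abs (integrable_const _) ?_
        exact fun ω => derw_S_bound μ p q α β S h n ω
    _ = (n:ℝ) := by simp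

lemma derw_EX (h : IsDERW μ p q α β S) {n : ℕ} (hn : 1 ≤ n) :
    ∫ ω, derwX S (n+1) ω ∂μ
      = α (n+1) * (2*p-1) / (n:ℝ) * ∫ ω, S n ω ∂μ + (1 - α (n+1)) * (2*β (n+1) - 1) := by
  have hm : derwF S n ≤ m0 := by
    refine iSup_le fun k => iSup_le fun _ => ?_
    exact (h.hmeas k).comap_le
  haveI : SigmaFinite (μ.trim hm) := by
    haveI := isFiniteMeasure_trim (μ := μ) hm
    infer_instance
  calc ∫ ω, derwX S (n+1) ω ∂μ
      = ∫ ω, (μ[derwX S (n+1) | derwF S n]) ω ∂μ :=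
        (integral_condExp hm).symm
    _ = ∫ ω, (α (n+1) * (2*p-1) / (n:ℝ) * S n ω + (1 - α (n+1)) * (2*β (n+1) - 1)) ∂μ :=
        integral_congr_ae (h.hCE n hn)
    _ = α (n+1) * (2*p-1) / (n:ℝ) * ∫ ω, S n ω ∂μ + (1 - α (n+1)) * (2*β (n+1) - 1) := by
        rw [integral_add ((derw_S_int μ p q α β S h n).const_mul _) (integrable_const _),
          integral_const_mul, integral_const]
        simp

lemma derw_ES_succ (h : IsDERW μ p q α β S) (n : ℕ) :
    ∫ ω, S (n+1) ω ∂μ = ∫ ω, S n ω ∂μ + ∫ ω, derwX S (n+1) ω ∂μ := by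
  have h0 : (fun ω => S (n+1) ω) = fun ω => S n ω + derwX S (n+1) ω := by
    funext ω; simp [derwX]
  rw [h0, integral_add (derw_S_int μ p q α β S h n) (derw_X_int μ p q α β S h (n+1))]

lemma derw_Y_eq (h : IsDERW μ p q α β S) (hp : 1/2 ≤ p) {n : ℕ} (hn : 1 ≤ n) (ω : Ω) :
    derwY μ p α S (n+1) ω =
      (derwX S (n+1) ω
        - (α (n+1) * (2*p-1) / (n:ℝ) * S n ω + (1 - α (n+1)) * (2*β (n+1) - 1)))
        / derwa p α (n+1) := by
  have hnR : (0:ℝ) < n := by exact_mod_cast hn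
  have ha : derwa p α (n+1) = derwa p α n * (1 + (2*p-1) * α (n+1) / (n:ℝ)) :=
    derw_a_succ p α hn
  have hA : (0:ℝ) < derwa p α n := derw_a_pos p α hp h.hα n
  have hA' : (0:ℝ) < derwa p α (n+1) := derw_a_pos p α hp h.hα (n+1)
  have hES := derw_ES_succ μ p q α β S h n
  have hEX := derw_EX μ p q α β S h hn
  have hX : derwX S (n+1) ω = S (n+1) ω - S n ω := by simp [derwX]
  have h1c : (0:ℝ) < 1 + (2*p-1) * α (n+1) / (n:ℝ) := by
    have := derw_one_le_factor p α hp h.hα n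
    linarith
  simp only [derwY, derwM, Nat.add_sub_cancel]
  rw [hES, hEX, hX, ha,
    div_sub_div _ _ (mul_pos hA h1c).ne' hA.ne',
    div_eq_div_iff (mul_pos (mul_pos hA h1c) hA).ne' (mul_pos hA h1c).ne']
  ring
lemma derw_Y_bound (h : IsDERW μ p q α β S) (hp : 1/2 ≤ p) (hp2 : p ≤ 1)
    {n : ℕ} (hn : 1 ≤ n) (ω : Ω) :
    |derwY μ p α S (n+1) ω| ≤ 3 / derwa p α (n+1) := by
  have hnR : (0:ℝ) < n := by exact_mod_cast hn
  have hA' : (0:ℝ) < derwa p α (n+1) := derw_a_pos p α hp h.hα (n+1)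
  rw [derw_Y_eq μ p q α β S h hp hn ω, abs_div, abs_of_pos hA']
  gcongr
  have hα1 := (h.hα (n+1)).1
  have hα2 := (h.hα (n+1)).2
  have hβ1 := (h.hβ (n+1)).1
  have hβ2 := (h.hβ (n+1)).2
  have hc0 : 0 ≤ α (n+1) * (2*p-1) / (n:ℝ) :=
    div_nonneg (mul_nonneg hα1 (by linarith)) hnR.le
  have h1 : |α (n+1) * (2*p-1) / (n:ℝ) * S n ω| ≤ 1 := by
    rw [abs_mul, abs_of_nonneg hc0]
    calc α (n+1) * (2*p-1) / (n:ℝ) * |S n ω|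
        ≤ α (n+1) * (2*p-1) / (n:ℝ) * (n:ℝ) := by
          gcongr
          exact derw_S_bound μ p q α β S h n ω
      _ = α (n+1) * (2*p-1) := by field_simp
      _ ≤ 1 := by nlinarith
  have h2 : |(1 - α (n+1)) * (2*β (n+1) - 1)| ≤ 1 := by
    rw [abs_mul, abs_of_nonneg (by linarith : (0:ℝ) ≤ 1 - α (n+1))]
    have : |2*β (n+1) - 1| ≤ 1 := abs_le.mpr ⟨by linarith, by linarith⟩
    nlinarith [abs_nonneg (2*β (n+1) - 1)]
  have h3 := derw_X_bound μ p q α β S h (n+1) ω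
  calc |derwX S (n+1) ω
        - (α (n+1) * (2*p-1) / (n:ℝ) * S n ω + (1 - α (n+1)) * (2*β (n+1) - 1))|
      ≤ |derwX S (n+1) ω|
        + |α (n+1) * (2*p-1) / (n:ℝ) * S n ω + (1 - α (n+1)) * (2*β (n+1) - 1)| :=
        abs_sub _ _
    _ ≤ |derwX S (n+1) ω| + (|α (n+1) * (2*p-1) / (n:ℝ) * S n ω|
        + |(1 - α (n+1)) * (2*β (n+1) - 1)|) := by
        have := abs_add_le (α (n+1) * (2*p-1) / (n:ℝ) * S n ω)
          ((1 - α (n+1)) * (2*β (n+1) - 1))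
        linarith
    _ ≤ 3 := by linarith

lemma derw_Y_meas (h : IsDERW μ p q α β S) (n : ℕ) : Measurable (derwY μ p α S n) := by
  have hM : ∀ m, Measurable (derwM μ p α S m) := fun m => by
    unfold derwM
    exact ((derw_S_meas μ p q α β S h m).sub measurable_const).div measurable_const
  exact (hM n).sub (hM (n-1))

lemma derw_Y_crude (h : IsDERW μ p q α β S) (hp : 1/2 ≤ p) (n : ℕ) (ω : Ω) :
    |derwY μ p α S n ω| ≤ 4 * n := by
  have hM : ∀ m, |derwM μ p α S m ω| ≤ 2 * m := fun m => by
    unfold derwM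
    have hA : (1:ℝ) ≤ derwa p α m := derw_one_le_a p α hp h.hα m
    rw [abs_div, abs_of_pos (by linarith : (0:ℝ) < derwa p α m)]
    have h1 : |S m ω - ∫ ω', S m ω' ∂μ| ≤ 2 * m := by
      have := derw_S_bound μ p q α β S h m ω
      have := derw_ES_abs μ p q α β S h m
      have := abs_sub (S m ω) (∫ ω', S m ω' ∂μ)
      linarith
    have h2 : |S m ω - ∫ ω', S m ω' ∂μ| / derwa p α m ≤ |S m ω - ∫ ω', S m ω' ∂μ| :=
      div_le_self (abs_nonneg _) (by linarith)
    linarith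
  have h1 := hM n
  have h2 := hM (n-1)
  have h3 : ((n-1 : ℕ):ℝ) ≤ (n:ℝ) := by exact_mod_cast Nat.sub_le n 1
  unfold derwY
  have := abs_sub (derwM μ p α S n ω) (derwM μ p α S (n-1) ω)
  linarith

lemma derw_Ysq_int (h : IsDERW μ p q α β S) (hp : 1/2 ≤ p) (n : ℕ) :
    Integrable (fun ω => derwY μ p α S n ω ^ 2) μ := by
  refine ⟨((derw_Y_meas μ p q α β S h n).pow_const 2).aestronglyMeasurable,
    HasFiniteIntegral.of_bounded (C := (4*n:ℝ)^2) (ae_of_all _ fun ω => ?_)⟩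
  rw [Real.norm_eq_abs, abs_pow]
  exact pow_le_pow_left₀ (abs_nonneg _) (derw_Y_crude μ p q α β S h hp n ω) 2

lemma derw_EYsq_le (h : IsDERW μ p q α β S) (hp : 1/2 ≤ p) (hp2 : p ≤ 1)
    {n : ℕ} (hn : 1 ≤ n) :
    ∫ ω, derwY μ p α S (n+1) ω ^ 2 ∂μ ≤ 9 / derwa p α (n+1) ^ 2 := by
  have hA' : (0:ℝ) < derwa p α (n+1) := derw_a_pos p α hp h.hα (n+1)
  calc ∫ ω, derwY μ p α S (n+1) ω ^ 2 ∂μ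
      ≤ ∫ _ω, 9 / derwa p α (n+1) ^ 2 ∂μ := by
        refine integral_mono (derw_Ysq_int μ p q α β S h hp (n+1)) (integrable_const _)
          fun ω => ?_
        have h1 := derw_Y_bound μ p q α β S h hp hp2 hn ω
        have h2 : derwY μ p α S (n+1) ω ^ 2 ≤ (3 / derwa p α (n+1)) ^ 2 := by
          rw [← sq_abs]
          exact pow_le_pow_left₀ (abs_nonneg _) h1 2
        calc derwY μ p α S (n+1) ω ^ 2 ≤ (3 / derwa p α (n+1)) ^ 2 := h2
          _ = 9 / derwa p α (n+1) ^ 2 := by rw [div_pow]; norm_num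
    _ = 9 / derwa p α (n+1) ^ 2 := by simp

lemma derw_EYsq_ge (h : IsDERW μ p q α β S) (hp : 1/2 ≤ p) {c : ℝ} (hc : 0 < c)
    {n : ℕ} (hn : 1 ≤ n)
    (hW : ∀ ω, |α (n+1) * (2*p-1) / (n:ℝ) * S n ω + (1 - α (n+1)) * (2*β (n+1) - 1)| ≤ 1 - c) :
    c^2 / derwa p α (n+1) ^ 2 ≤ ∫ ω, derwY μ p α S (n+1) ω ^ 2 ∂μ := by
  have hA' : (0:ℝ) < derwa p α (n+1) := derw_a_pos p α hp h.hα (n+1)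
  have key : ∀ ω, c^2 / derwa p α (n+1) ^ 2 ≤ derwY μ p α S (n+1) ω ^ 2 := fun ω => by
    rw [derw_Y_eq μ p q α β S h hp hn ω, div_pow]
    have hx : |derwX S (n+1) ω| = 1 := by
      rcases h.hpm (n+1) (by omega) ω with h1 | h1 <;> simp [h1]
    have habs := abs_sub_abs_le_abs_sub (derwX S (n+1) ω)
      (α (n+1) * (2*p-1) / (n:ℝ) * S n ω + (1 - α (n+1)) * (2*β (n+1) - 1))
    rw [hx] at habs
    have hWω := hW ω
    have hnum : c ≤ |derwX S (n+1) ω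
        - (α (n+1) * (2*p-1) / (n:ℝ) * S n ω + (1 - α (n+1)) * (2*β (n+1) - 1))| := by
      linarith
    have h2 : c^2 ≤ (derwX S (n+1) ω
        - (α (n+1) * (2*p-1) / (n:ℝ) * S n ω + (1 - α (n+1)) * (2*β (n+1) - 1)))^2 := by
      rw [← sq_abs (derwX S (n+1) ω - _)]
      exact pow_le_pow_left₀ hc.le hnum 2
    exact div_le_div_of_nonneg_right h2 (pow_pos hA' 2).le
  calc c^2 / derwa p α (n+1) ^ 2 = ∫ _ω, c^2 / derwa p α (n+1) ^ 2 ∂μ := by simp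
    _ ≤ ∫ ω, derwY μ p α S (n+1) ω ^ 2 ∂μ :=
        integral_mono (integrable_const _) (derw_Ysq_int μ p q α β S h hp (n+1)) key
lemma derw_Y_bound' (h : IsDERW μ p q α β S) (hp : 1/2 ≤ p) (hp2 : p ≤ 1)
    {m : ℕ} (hm : 2 ≤ m) (ω : Ω) :
    |derwY μ p α S m ω| ≤ 3 / derwa p α m := by
  obtain ⟨j, rfl⟩ : ∃ j, m = j + 1 := ⟨m - 1, by omega⟩
  exact derw_Y_bound μ p q α β S h hp hp2 (by omega) ω

lemma derw_EYsq_le' (h : IsDERW μ p q α β S) (hp : 1/2 ≤ p) (hp2 : p ≤ 1)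
    {m : ℕ} (hm : 2 ≤ m) :
    ∫ ω, derwY μ p α S m ω ^ 2 ∂μ ≤ 9 / derwa p α m ^ 2 := by
  obtain ⟨j, rfl⟩ : ∃ j, m = j + 1 := ⟨m - 1, by omega⟩
  exact derw_EYsq_le μ p q α β S h hp hp2 (by omega)
theorem derw_lindeberg (h : IsDERW μ p q α β S)
    (hcond : ((3 / 4 < p ∧ p < 1 ∧ 1 / (4 * p - 2) < liminf α atTop) ∨
      (p = 1 ∧ 1 / (4 * p - 2) < liminf α atTop ∧ limsup α atTop < 1 ∧
        0 < liminf β atTop ∧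
        limsup β atTop < (1 - limsup α atTop) / (1 - liminf α atTop)))) :
    ∀ ε : ℝ, 0 < ε →
      Tendsto (fun n =>
        (∑' k : ℕ, ∫ ω in {ω | ε * Real.sqrt (derwssq μ p α S n) < |derwY μ p α S (n + k) ω|},
            derwY μ p α S (n + k) ω ^ 2 ∂μ) / derwssq μ p α S n) atTop (nhds 0) := by
  intro ε hε
  have hα := h.hα
  have hp2 : p ≤ 1 := h.hp.2
  have hp34 : 3/4 < p := by
    rcases hcond with ⟨h1, _⟩ | ⟨h1, _⟩
    · exact h1
    · rw [h1]; norm_num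
  have hp12 : (1:ℝ)/2 ≤ p := by linarith
  have hLα : 1/(4*p-2) < liminf α atTop := by
    rcases hcond with ⟨_, _, h1⟩ | ⟨_, h1, _⟩ <;> exact h1
  have hbddα_above : IsBoundedUnder (· ≤ ·) atTop α :=
    isBoundedUnder_of ⟨1, fun n => (hα n).2⟩
  have hbddα_below : IsBoundedUnder (· ≥ ·) atTop α :=
    isBoundedUnder_of ⟨0, fun n => (hα n).1⟩
  have hpos : (0:ℝ) < 4*p-2 := by linarith
  have hinv1 : 1/(4*p-2) < 1 := by rw [div_lt_one hpos]; linarith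
  obtain ⟨ℓ₀, hℓ₀1, hℓ₀2⟩ := exists_between hLα
  obtain ⟨ℓ, hℓgt, hℓ1, hℓlim⟩ : ∃ ℓ : ℝ, 1/(4*p-2) < ℓ ∧ ℓ ≤ 1 ∧ ℓ < liminf α atTop :=
    ⟨min ℓ₀ 1, lt_min hℓ₀1 hinv1, min_le_right _ _, lt_of_le_of_lt (min_le_left _ _) hℓ₀2⟩
  have hℓ0 : 0 < ℓ := lt_of_le_of_lt (by positivity) hℓgt
  obtain ⟨N₁, hN₁⟩ := eventually_atTop.mp (eventually_lt_of_lt_liminf hℓlim hbddα_below)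
  have hθhalf : 1/2 < (2*p-1) * ℓ := by
    have h1 : 1 < ℓ * (4*p-2) := (div_lt_iff₀ hpos).mp hℓgt
    nlinarith
  have hθ1 : (2*p-1) * ℓ ≤ 1 := by nlinarith
  -- The scalar bound `(2p-1)αₘ + (1-αₘ)|2βₘ-1| ≤ 1 - c` eventually
  obtain ⟨c, hc0, N₂, hN₂⟩ : ∃ c : ℝ, 0 < c ∧ ∃ N₂ : ℕ,
      ∀ m, N₂ ≤ m → (2*p-1) * α m + (1 - α m) * |2*β m - 1| ≤ 1 - c := by
    rcases hcond with ⟨_, hplt, _⟩ | ⟨hp1, _, hsupα, hinfβ, hsupβ⟩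
    · refine ⟨(2-2*p) * ℓ, by nlinarith, N₁, fun m hm => ?_⟩
      have h1 := (hα m).1
      have h2 := (hα m).2
      have h3 := (h.hβ m).1
      have h4 := (h.hβ m).2
      have h5 : |2*β m - 1| ≤ 1 := abs_le.mpr ⟨by linarith, by linarith⟩
      have h6 : ℓ ≤ α m := (hN₁ m hm).le
      nlinarith [abs_nonneg (2*β m - 1)]
    · have hliminfle : liminf α atTop ≤ limsup α atTop :=
        liminf_le_limsup hbddα_above hbddα_below
      have hβbdd_above : IsBoundedUnder (· ≤ ·) atTop β :=
        isBoundedUnder_of ⟨1, fun n => (h.hβ n).2⟩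
      have hβbdd_below : IsBoundedUnder (· ≥ ·) atTop β :=
        isBoundedUnder_of ⟨0, fun n => (h.hβ n).1⟩
      have hu₁ : limsup α atTop < (limsup α atTop + 1)/2 := by linarith
      have hu₁lt : (limsup α atTop + 1)/2 < 1 := by linarith
      obtain ⟨N₃, hN₃⟩ := eventually_atTop.mp (eventually_lt_of_limsup_lt hu₁ hbddα_above)
      have hb₀ : 0 < liminf β atTop / 2 := by linarith
      obtain ⟨N₄, hN₄⟩ := eventually_atTop.mp
        (eventually_lt_of_lt_liminf (by linarith : liminf β atTop / 2 < liminf β atTop)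
          hβbdd_below)
      have hsupβ1 : limsup β atTop < 1 := by
        have h7 : 0 < 1 - liminf α atTop := by
          have h8 : liminf α atTop < 1 := lt_of_le_of_lt hliminfle hsupα
          linarith
        have h8 : (1 - limsup α atTop) / (1 - liminf α atTop) ≤ 1 := by
          rw [div_le_one h7]; linarith
        linarith
      have hu₂a : limsup β atTop < (limsup β atTop + 1)/2 := by linarith
      have hu₂b : (limsup β atTop + 1)/2 < 1 := by linarith
      obtain ⟨N₅, hN₅⟩ := eventually_atTop.mp (eventually_lt_of_limsup_lt hu₂a hβbdd_above)
      obtain ⟨u₁, hN₃, hu₁lt'⟩ : ∃ u₁ : ℝ, (∀ m, N₃ ≤ m → α m < u₁) ∧ u₁ < 1 :=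
        ⟨(limsup α atTop + 1)/2, hN₃, hu₁lt⟩
      obtain ⟨u₂, hN₅, hu₂lt'⟩ : ∃ u₂ : ℝ, (∀ m, N₅ ≤ m → β m < u₂) ∧ u₂ < 1 :=
        ⟨(limsup β atTop + 1)/2, hN₅, hu₂b⟩
      obtain ⟨b₀, hN₄, hb₀'⟩ : ∃ b₀ : ℝ, (∀ m, N₄ ≤ m → b₀ < β m) ∧ 0 < b₀ :=
        ⟨liminf β atTop / 2, hN₄, hb₀⟩
      obtain ⟨δ, hδ0, hδb, hδu⟩ : ∃ δ : ℝ, 0 < δ ∧ δ ≤ b₀ ∧ δ ≤ 1 - u₂ :=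
        ⟨min b₀ (1 - u₂), lt_min hb₀' (by linarith), min_le_left _ _, min_le_right _ _⟩
      refine ⟨2 * δ * (1 - u₁), by nlinarith, max N₃ (max N₄ N₅), fun m hm => ?_⟩
      have hm3 : α m < u₁ := hN₃ m (le_trans (le_max_left _ _) hm)
      have hm4 : b₀ < β m :=
        hN₄ m (le_trans (le_trans (le_max_left N₄ N₅) (le_max_right N₃ _)) hm)
      have hm5 : β m < u₂ :=
        hN₅ m (le_trans (le_trans (le_max_right N₄ N₅) (le_max_right N₃ _)) hm)
      have h1 := (hα m).1
      have h2 := (hα m).2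
      have habs : |2*β m - 1| ≤ 1 - 2*δ :=
        abs_le.mpr ⟨by linarith, by linarith⟩
      have h9 : (1 - α m) * |2*β m - 1| ≤ (1 - α m) * (1 - 2*δ) :=
        mul_le_mul_of_nonneg_left habs (by linarith)
      have h12 : 0 ≤ 2*δ*(u₁ - α m) := mul_nonneg (by linarith) (by linarith)
      rw [hp1]
      nlinarith [h9, h12]
  -- assemble the threshold `N`
  obtain ⟨N, hN1, hN2, hNN₁, hNN₂⟩ : ∃ N : ℕ, 1 ≤ N ∧ 2 ≤ N ∧ N₁ ≤ N ∧ N₂ ≤ N :=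
    ⟨N₁ + N₂ + 2, by omega, by omega, by omega, by omega⟩
  have hNreal : (0:ℝ) < N := by exact_mod_cast lt_of_lt_of_le one_pos hN1
  have hevℓ : ∀ k, N ≤ k → ℓ ≤ α k := fun k hk => (hN₁ k (le_trans hNN₁ hk)).le
  set g : ℕ → ℝ := fun k => ∫ ω, derwY μ p α S k ω ^ 2 ∂μ with hgdef
  have hgnonneg : ∀ k, 0 ≤ g k := fun k => integral_nonneg fun ω => sq_nonneg _
  -- growth of `a`
  have hasq : ∀ k, N ≤ k → ((k:ℝ)/(N:ℝ))^(2*((2*p-1)*ℓ)) ≤ derwa p α k ^ 2 := by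
    intro k hk
    have h1 : ((k:ℝ)/(N:ℝ))^((2*p-1)*ℓ) ≤ derwa p α k :=
      derw_a_growth p α hp12 hα hℓ0.le hθ1 hN1 hevℓ hk
    have hk0 : (0:ℝ) < k := lt_of_lt_of_le hNreal (by exact_mod_cast hk)
    have hbase : (0:ℝ) ≤ (k:ℝ)/(N:ℝ) := by positivity
    calc ((k:ℝ)/(N:ℝ))^(2*((2*p-1)*ℓ)) = (((k:ℝ)/(N:ℝ))^((2*p-1)*ℓ))^(2:ℕ) := by
          rw [← Real.rpow_natCast (((k:ℝ)/(N:ℝ))^((2*p-1)*ℓ)) 2, ← Real.rpow_mul hbase]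
          norm_num [mul_comm]
      _ ≤ derwa p α k ^ 2 := pow_le_pow_left₀ (Real.rpow_nonneg hbase _) h1 2
  -- upper bound on the variances
  have hgle : ∀ k, N ≤ k → g k ≤ 9 * (N:ℝ)^(2*((2*p-1)*ℓ)) * ((k:ℝ)^(2*((2*p-1)*ℓ)))⁻¹ := by
    intro k hk
    have h1 : g k ≤ 9 / derwa p α k ^ 2 :=
      derw_EYsq_le' μ p q α β S h hp12 hp2 (le_trans hN2 hk)
    have h2 := hasq k hk
    have hk0 : (0:ℝ) < k := lt_of_lt_of_le hNreal (by exact_mod_cast hk)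
    have hr0 : (0:ℝ) < ((k:ℝ)/(N:ℝ))^(2*((2*p-1)*ℓ)) :=
      Real.rpow_pos_of_pos (by positivity) _
    have h3 : 9 / derwa p α k ^ 2 ≤ 9 / ((k:ℝ)/(N:ℝ))^(2*((2*p-1)*ℓ)) :=
      div_le_div_of_nonneg_left (by norm_num) hr0 h2
    have h4 : 9 / ((k:ℝ)/(N:ℝ))^(2*((2*p-1)*ℓ))
        = 9 * (N:ℝ)^(2*((2*p-1)*ℓ)) * ((k:ℝ)^(2*((2*p-1)*ℓ)))⁻¹ := by
      rw [Real.div_rpow hk0.le hNreal.le, div_div_eq_mul_div, div_eq_mul_inv]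
    linarith [h4 ▸ h3]
  -- summability
  have hsum_maj : Summable (fun k : ℕ => 9 * (N:ℝ)^(2*((2*p-1)*ℓ)) * ((k:ℝ)^(2*((2*p-1)*ℓ)))⁻¹) :=
    (Real.summable_nat_rpow_inv.mpr (by linarith : (1:ℝ) < 2*((2*p-1)*ℓ))).mul_left _
  have hsumg : Summable g := by
    rw [← summable_nat_add_iff N]
    refine Summable.of_nonneg_of_le (fun k => hgnonneg _) (fun k => hgle (k + N) (by omega)) ?_
    exact (summable_nat_add_iff N).mpr hsum_maj
  -- pointwise bound on the conditional drift
  have hWbound : ∀ n : ℕ, 1 ≤ n → N₂ ≤ n + 1 → ∀ ω,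
      |α (n+1) * (2*p-1) / (n:ℝ) * S n ω + (1 - α (n+1)) * (2*β (n+1) - 1)| ≤ 1 - c := by
    intro n hn hn2 ω
    have hnR : (0:ℝ) < n := by exact_mod_cast hn
    have hα1 := (hα (n+1)).1
    have hα2 := (hα (n+1)).2
    have hc1 : 0 ≤ α (n+1) * (2*p-1) / (n:ℝ) :=
      div_nonneg (mul_nonneg hα1 (by linarith)) hnR.le
    have ht1 : |α (n+1) * (2*p-1) / (n:ℝ) * S n ω| ≤ (2*p-1) * α (n+1) := by
      rw [abs_mul, abs_of_nonneg hc1]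
      calc α (n+1) * (2*p-1) / (n:ℝ) * |S n ω|
          ≤ α (n+1) * (2*p-1) / (n:ℝ) * (n:ℝ) := by
            gcongr
            exact derw_S_bound μ p q α β S h n ω
        _ = (2*p-1) * α (n+1) := by field_simp
    have ht2 : |(1 - α (n+1)) * (2*β (n+1) - 1)| = (1 - α (n+1)) * |2*β (n+1) - 1| := by
      rw [abs_mul, abs_of_nonneg (by linarith : (0:ℝ) ≤ 1 - α (n+1))]
    have hscal := hN₂ (n+1) hn2
    calc |α (n+1) * (2*p-1) / (n:ℝ) * S n ω + (1 - α (n+1)) * (2*β (n+1) - 1)|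
        ≤ |α (n+1) * (2*p-1) / (n:ℝ) * S n ω| + |(1 - α (n+1)) * (2*β (n+1) - 1)| :=
          abs_add_le _ _
      _ ≤ (2*p-1) * α (n+1) + (1 - α (n+1)) * |2*β (n+1) - 1| := by
          rw [ht2] at *
          linarith
      _ ≤ 1 - c := hscal
  -- lower bound on `s_n²`
  have hssq_ge : ∀ n, N ≤ n → (n:ℝ) * c^2 / (4 * derwa p α n ^ 2) ≤ derwssq μ p α S n := by
    intro n hn
    have hnR : (0:ℝ) < n := lt_of_lt_of_le hNreal (by exact_mod_cast hn)
    have hsum' : Summable fun k => g (n + k) := by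
      have h' := (summable_nat_add_iff (f := g) n).mpr hsumg
      exact h'.congr fun b => by rw [add_comm]
    have hpart : ∑ k ∈ Finset.range (n+1), g (n + k) ≤ ∑' k, g (n + k) :=
      Summable.sum_le_tsum _ (fun k _ => hgnonneg _) hsum'
    have hterm : ∀ k ∈ Finset.range (n+1), c^2 / (4 * derwa p α n ^ 2) ≤ g (n + k) := by
      intro k hk
      have hkn : k ≤ n := by
        have := Finset.mem_range.mp hk
        omega
      obtain ⟨j, hj⟩ : ∃ j, n + k = j + 1 := ⟨n + k - 1, by omega⟩
      have hj1 : 1 ≤ j := by omega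
      have hE := derw_EYsq_ge μ p q α β S h hp12 hc0 hj1
        (hWbound j hj1 (by omega))
      have hA0 : 0 < derwa p α n := derw_a_pos p α hp12 hα n
      have hA0' : 0 < derwa p α (j+1) := derw_a_pos p α hp12 hα (j+1)
      have hratio : derwa p α (j+1) ≤ 2 * derwa p α n := by
        have h1 : derwa p α (j+1) ≤ derwa p α n * ((j:ℝ)+1) / n := by
          have := derw_a_ratio p α hp12 hp2 hα (show 1 ≤ n by omega) (show n ≤ j+1 by omega)
          push_cast at this
          exact this
        have h2 : ((j:ℝ)+1) ≤ 2*(n:ℝ) := by exact_mod_cast (show j+1 ≤ 2*n by omega)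
        rw [le_div_iff₀ hnR] at h1
        nlinarith [mul_le_mul_of_nonneg_left h2 hA0.le, hnR, hA0']
      have h4 : derwa p α (j+1) ^ 2 ≤ 4 * derwa p α n ^ 2 := by nlinarith
      have h5 : c^2 / (4 * derwa p α n ^ 2) ≤ c^2 / derwa p α (j+1) ^ 2 :=
        div_le_div_of_nonneg_left (sq_nonneg c) (pow_pos hA0' 2) h4
      rw [hj]
      exact h5.trans hE
    have hsum_ge : ((n:ℝ)+1) * (c^2 / (4 * derwa p α n ^ 2))
        ≤ ∑ k ∈ Finset.range (n+1), g (n + k) := by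
      calc ((n:ℝ)+1) * (c^2 / (4 * derwa p α n ^ 2))
          = ∑ _k ∈ Finset.range (n+1), c^2 / (4 * derwa p α n ^ 2) := by
            rw [Finset.sum_const, Finset.card_range]
            push_cast
            ring
        _ ≤ ∑ k ∈ Finset.range (n+1), g (n + k) := Finset.sum_le_sum hterm
    have hrfl : derwssq μ p α S n = ∑' k, g (n + k) := rfl
    rw [hrfl]
    have hq0 : 0 ≤ c^2 / (4 * derwa p α n ^ 2) := by positivity
    have : (n:ℝ) * c^2 / (4 * derwa p α n ^ 2) ≤ ((n:ℝ)+1) * (c^2 / (4 * derwa p α n ^ 2)) := by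
      rw [mul_div_assoc]
      nlinarith
    linarith
  -- conclusion: the Lindeberg sets are eventually empty
  obtain ⟨n₀, hn₀⟩ : ∃ n₀ : ℕ, 36 / (c^2 * ε^2) < n₀ := exists_nat_gt _
  have hfinal : ∀ᶠ n in atTop,
      (∑' k : ℕ, ∫ ω in {ω | ε * Real.sqrt (derwssq μ p α S n) < |derwY μ p α S (n + k) ω|},
          derwY μ p α S (n + k) ω ^ 2 ∂μ) / derwssq μ p α S n = 0 := by
    rw [eventually_atTop]
    refine ⟨max N n₀, fun n hn => ?_⟩
    have hnN : N ≤ n := le_trans (le_max_left _ _) hn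
    have hnn₀ : (36 / (c^2*ε^2) : ℝ) < n := by
      refine lt_of_lt_of_le hn₀ ?_
      exact_mod_cast le_trans (le_max_right _ _) hn
    have hnR : (0:ℝ) < n := lt_of_lt_of_le hNreal (by exact_mod_cast hnN)
    have hA0 : 0 < derwa p α n := derw_a_pos p α hp12 hα n
    have hs := hssq_ge n hnN
    have h36 : 36 < (n:ℝ) * (c^2 * ε^2) := by
      rw [div_lt_iff₀ (by positivity)] at hnn₀
      linarith
    have hkey : 9 / (ε^2 * derwa p α n ^ 2) < derwssq μ p α S n := by
      refine lt_of_lt_of_le ?_ hs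
      rw [div_lt_div_iff₀ (by positivity) (by positivity)]
      nlinarith [mul_lt_mul_of_pos_right h36 (by positivity : (0:ℝ) < derwa p α n ^ 2)]
    have hsqrt : 3 / derwa p α n < ε * Real.sqrt (derwssq μ p α S n) := by
      have h1 : 3/(ε * derwa p α n) < Real.sqrt (derwssq μ p α S n) := by
        rw [Real.lt_sqrt (by positivity)]
        calc (3/(ε * derwa p α n))^2 = 9/(ε^2 * derwa p α n ^ 2) := by
              rw [div_pow, mul_pow]
              norm_num
          _ < _ := hkey
      calc 3 / derwa p α n = ε * (3/(ε * derwa p α n)) := by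
            field_simp
        _ < ε * Real.sqrt (derwssq μ p α S n) := mul_lt_mul_of_pos_left h1 hε
    have hempty : ∀ k : ℕ,
        {ω | ε * Real.sqrt (derwssq μ p α S n) < |derwY μ p α S (n + k) ω|} = ∅ := by
      intro k
      rw [Set.eq_empty_iff_forall_notMem]
      intro ω hω
      simp only [Set.mem_setOf_eq] at hω
      have h1 : |derwY μ p α S (n+k) ω| ≤ 3 / derwa p α (n+k) :=
        derw_Y_bound' μ p q α β S h hp12 hp2 (by omega) ω
      have h2 : 3 / derwa p α (n+k) ≤ 3 / derwa p α n :=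
        div_le_div_of_nonneg_left (by norm_num) hA0
          (derw_a_mono p α hp12 hα (Nat.le_add_right n k))
      linarith
    have hz : ∀ k : ℕ,
        (∫ ω in {ω | ε * Real.sqrt (derwssq μ p α S n) < |derwY μ p α S (n + k) ω|},
          derwY μ p α S (n + k) ω ^ 2 ∂μ) = 0 := fun k => by
      rw [hempty k]
      exact setIntegral_empty
    rw [tsum_congr hz, tsum_zero, zero_div]
  exact Tendsto.congr' (hfinal.mono fun n hn => hn.symm) tendsto_const_nhds
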